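/- Let d ≥ 1. For every (s_1,…,s_d) ∈ ℂ^d in the region (R), one has ∏_{k=1}^d (1 − q^{d−k+1−(s_k+⋯+s_d)}) · Z_d(F_q[T]; s_1,…,s_d) = 1; equivalently, Z_d(F_q[T]; s_1,…,s_d) = ∏_{k=1}^d (1 − q^{d−k+1−(s_k+⋯+s_d)})^{-1} on (R). -/

import Mathlib

open Finset Polynomial

section Aux

lemma cpow_sum' {ι : Type*} {x : ℂ} (hx : x ≠ 0) (S : Finset ι) (f : ι → ℂ) :
    x ^ (∑ k ∈ S, f k) = ∏ k ∈ S, x ^ f k := by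
  classical
  induction S using Finset.induction_on with
  | empty => simp
  | insert _ _ h ih =>
      rw [Finset.sum_insert h, Finset.prod_insert h, Complex.cpow_add _ _ hx, ih]

lemma aux_nat_pow_cpow (q : ℕ) (n : ℕ) (c : ℂ) :
    ((q : ℂ) ^ n) ^ c = ((q : ℂ) ^ c) ^ n := by
  have him : (Complex.log (q : ℂ) * (n : ℂ)).im = 0 := by
    simp [← Complex.natCast_log, Complex.mul_im]
  rw [← Complex.cpow_natCast (q : ℂ) n,
    ← Complex.cpow_mul (x := (q : ℂ)) (y := (n : ℂ)) c (by rw [him]; linarith [Real.pi_pos])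
      (by rw [him]; exact Real.pi_pos.le), ← Complex.cpow_nat_mul]

lemma prod_Iic_comm' {M : Type*} [CommMonoid M] {d : ℕ} (f : Fin d → Fin d → M) :
    ∏ k : Fin d, ∏ j ∈ Finset.Iic k, f j k = ∏ j : Fin d, ∏ k ∈ Finset.Ici j, f j k := by
  have h1 : ∀ k : Fin d, Finset.Iic k = Finset.univ.filter (fun j => j ≤ k) := by
    intro k; ext x; simp
  have h2 : ∀ j : Fin d, Finset.Ici j = Finset.univ.filter (fun k => j ≤ k) := by
    intro j; ext x; simp
  simp_rw [h1, h2, Finset.prod_filter]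
  exact Finset.prod_comm

lemma geom_pi_real : ∀ (d : ℕ) (r : Fin d → ℝ), (∀ j, 0 ≤ r j) → (∀ j, r j < 1) →
    HasSum (fun m : Fin d → ℕ => ∏ j, r j ^ m j) (∏ j, (1 - r j)⁻¹) := by
  intro d
  induction d with
  | zero =>
      intro r _ _
      have h := hasSum_single (f := fun m : Fin 0 → ℕ => ∏ j, r j ^ m j)
        (fun _ => 0) (fun b' hb' => absurd (_root_.funext fun i => i.elim0) hb')
      simpa using h
  | succ d ih =>
      intro r hr0 hr1
      have h1 : HasSum (fun a : ℕ => r 0 ^ a) (1 - r 0)⁻¹ :=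
        hasSum_geometric_of_lt_one (hr0 0) (hr1 0)
      have h2 : HasSum (fun m : Fin d → ℕ => ∏ j : Fin d, r j.succ ^ m j)
          (∏ j : Fin d, (1 - r j.succ)⁻¹) :=
        ih _ (fun j => hr0 _) (fun j => hr1 _)
      have hn1 : (fun a : ℕ => ‖r 0 ^ a‖) = fun a : ℕ => r 0 ^ a :=
        funext fun a => by
          rw [Real.norm_eq_abs, abs_of_nonneg (pow_nonneg (hr0 0) a)]
      have hn2 : (fun m : Fin d → ℕ => ‖∏ j : Fin d, r j.succ ^ m j‖) =
          fun m : Fin d → ℕ => ∏ j : Fin d, r j.succ ^ m j :=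
        funext fun m => by
          rw [Real.norm_eq_abs, abs_of_nonneg
            (Finset.prod_nonneg fun j _ => pow_nonneg (hr0 _) _)]
      have hs : Summable fun x : ℕ × (Fin d → ℕ) =>
          (r 0 ^ x.1) * ∏ j : Fin d, r j.succ ^ x.2 j :=
        summable_mul_of_summable_norm (f := fun a : ℕ => r 0 ^ a)
          (g := fun m : Fin d → ℕ => ∏ j : Fin d, r j.succ ^ m j)
          (by rw [hn1]; exact h1.summable) (by rw [hn2]; exact h2.summable)
      have hmul := h1.mul h2 hs
      rw [← (Fin.consEquiv (fun _ : Fin (d + 1) => ℕ)).hasSum_iff]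
      have hcomp : ((fun m : Fin (d + 1) → ℕ => ∏ j, r j ^ m j) ∘
          (Fin.consEquiv (fun _ : Fin (d + 1) => ℕ))) =
          fun x : ℕ × (Fin d → ℕ) => (r 0 ^ x.1) * ∏ j : Fin d, r j.succ ^ x.2 j := by
        funext x
        simp [Fin.consEquiv, Fin.prod_univ_succ]
      rw [hcomp, Fin.prod_univ_succ]
      exact hmul

lemma geom_pi_K {K : Type*} [NormedField K] [CompleteSpace K] :
    ∀ (d : ℕ) (r : Fin d → K), (∀ j, ‖r j‖ < 1) →
    HasSum (fun m : Fin d → ℕ => ∏ j, r j ^ m j) (∏ j, (1 - r j)⁻¹) := by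
  intro d
  induction d with
  | zero =>
      intro r _
      have h := hasSum_single (f := fun m : Fin 0 → ℕ => ∏ j, r j ^ m j)
        (fun _ => 0) (fun b' hb' => absurd (_root_.funext fun i => i.elim0) hb')
      simpa using h
  | succ d ih =>
      intro r hr
      have h1 : HasSum (fun a : ℕ => r 0 ^ a) (1 - r 0)⁻¹ :=
        hasSum_geometric_of_norm_lt_one (hr 0)
      have h2 : HasSum (fun m : Fin d → ℕ => ∏ j : Fin d, r j.succ ^ m j)
          (∏ j : Fin d, (1 - r j.succ)⁻¹) :=
        ih _ (fun j => hr _)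
      have hgr := geom_pi_real d (fun j => ‖r j.succ‖) (fun j => norm_nonneg _)
        (fun j => hr _)
      have hn2 : (fun m : Fin d → ℕ => ‖∏ j : Fin d, r j.succ ^ m j‖) =
          fun m : Fin d → ℕ => ∏ j : Fin d, ‖r j.succ‖ ^ m j :=
        funext fun m => by
          rw [norm_prod]; exact Finset.prod_congr rfl fun j _ => norm_pow _ _
      have hs : Summable fun x : ℕ × (Fin d → ℕ) =>
          (r 0 ^ x.1) * ∏ j : Fin d, r j.succ ^ x.2 j :=
        summable_mul_of_summable_norm (f := fun a : ℕ => r 0 ^ a)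
          (g := fun m : Fin d → ℕ => ∏ j : Fin d, r j.succ ^ m j)
          (by simpa [norm_pow] using
            (summable_geometric_of_lt_one (norm_nonneg (r 0)) (hr 0)))
          (by rw [hn2]; exact hgr.summable)
      have hmul := h1.mul h2 hs
      rw [← (Fin.consEquiv (fun _ : Fin (d + 1) => ℕ)).hasSum_iff]
      have hcomp : ((fun m : Fin (d + 1) → ℕ => ∏ j, r j ^ m j) ∘
          (Fin.consEquiv (fun _ : Fin (d + 1) => ℕ))) =
          fun x : ℕ × (Fin d → ℕ) => (r 0 ^ x.1) * ∏ j : Fin d, r j.succ ^ x.2 j := by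
        funext x
        simp [Fin.consEquiv, Fin.prod_univ_succ]
      rw [hcomp, Fin.prod_univ_succ]
      exact hmul

open scoped Classical in
lemma lemmaA {K : Type*} [NormedField K] [CompleteSpace K] {d : ℕ} (t : Fin d → K)
    (h : ∀ j : Fin d, ‖∏ k ∈ Finset.Ici j, t k‖ < 1) :
    HasSum (fun n : Fin d → ℕ => if Monotone n then ∏ k, t k ^ n k else 0)
      (∏ j, (1 - ∏ k ∈ Finset.Ici j, t k)⁻¹) := by
  have hgeo := geom_pi_K d (fun j => ∏ k ∈ Finset.Ici j, t k) h
  set i : (Fin d → ℕ) → (Fin d → ℕ) := fun m k => ∑ j ∈ Finset.Iic k, m j with hidef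
  have hIic0 : ∀ k : Fin d, k.val = 0 → Finset.Iic k = {k} := by
    intro k hk
    ext x
    simp only [Finset.mem_Iic, Finset.mem_singleton, Fin.le_def, Fin.ext_iff]
    omega
  have hIic : ∀ k : Fin d, k.val ≠ 0 →
      Finset.Iic k = insert k (Finset.Iic ⟨k.val - 1,
        lt_of_le_of_lt (Nat.sub_le _ _) k.isLt⟩) := by
    intro k hk
    ext x
    simp only [Finset.mem_Iic, Finset.mem_insert, Fin.le_def, Fin.ext_iff]
    omega
  have hzero : ∀ (m : Fin d → ℕ) (k : Fin d), k.val = 0 → i m k = m k := by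
    intro m k hk
    rw [hidef]
    simp only
    rw [hIic0 k hk, Finset.sum_singleton]
  have hstep : ∀ (m : Fin d → ℕ) (k : Fin d), k.val ≠ 0 →
      i m k = m k + i m ⟨k.val - 1, lt_of_le_of_lt (Nat.sub_le _ _) k.isLt⟩ := by
    intro m k hk
    rw [hidef]
    simp only
    rw [hIic k hk, Finset.sum_insert]
    simp only [Finset.mem_Iic, Fin.le_def]
    omega
  have hinj : Function.Injective i := by
    intro m m' hmm
    funext k
    rcases Nat.eq_zero_or_pos k.val with hk | hk
    · have h1 := congrFun hmm k
      rwa [hzero m k hk, hzero m' k hk] at h1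
    · have hk' : k.val ≠ 0 := by omega
      have h1 := congrFun hmm k
      have h2 := congrFun hmm ⟨k.val - 1, lt_of_le_of_lt (Nat.sub_le _ _) k.isLt⟩
      rw [hstep m k hk', hstep m' k hk'] at h1
      omega
  have hsurj : ∀ n : Fin d → ℕ, Monotone n → ∃ m, i m = n := by
    intro n hn
    set m : Fin d → ℕ := fun k =>
      if hk : k.val = 0 then n k
      else n k - n ⟨k.val - 1, lt_of_le_of_lt (Nat.sub_le _ _) k.isLt⟩ with hm
    refine ⟨m, ?_⟩
    have H : ∀ v : ℕ, ∀ k : Fin d, k.val = v → i m k = n k := by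
      intro v
      induction v with
      | zero =>
          intro k hk
          rw [hzero m k hk, hm]
          simp [hk]
      | succ v ihv =>
          intro k hk
          have hk' : k.val ≠ 0 := by omega
          have hlt : k.val - 1 < d := lt_of_le_of_lt (Nat.sub_le _ _) k.isLt
          rw [hstep m k hk']
          have hprev := ihv ⟨k.val - 1, hlt⟩ (by simp [hk])
          rw [hprev]
          have hmk : m k = n k - n ⟨k.val - 1, hlt⟩ := by rw [hm]; simp [hk']
          have hle : n ⟨k.val - 1, hlt⟩ ≤ n k := hn (by simp [Fin.le_def])
          omega
    exact funext fun k => H k.val k rfl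
  have hrange : ∀ n, n ∉ Set.range i →
      (if Monotone n then ∏ k, t k ^ n k else (0 : K)) = 0 := by
    intro n hn
    rw [if_neg]
    intro hmono
    exact hn (hsurj n hmono)
  have hcomp : ((fun n : Fin d → ℕ => if Monotone n then ∏ k, t k ^ n k else (0 : K)) ∘ i) =
      fun m : Fin d → ℕ => ∏ j, (∏ k ∈ Finset.Ici j, t k) ^ m j := by
    funext m
    have hmono : Monotone (i m) := by
      intro a b hab
      exact Finset.sum_le_sum_of_subset (Finset.Iic_subset_Iic.mpr hab)
    simp only [Function.comp_apply, if_pos hmono]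
    calc ∏ k, t k ^ (i m k)
        = ∏ k, ∏ j ∈ Finset.Iic k, t k ^ m j := by
          refine Finset.prod_congr rfl fun k _ => ?_
          rw [hidef]
          exact (Finset.prod_pow_eq_pow_sum _ _ _).symm
      _ = ∏ j, ∏ k ∈ Finset.Ici j, t k ^ m j := prod_Iic_comm' _
      _ = ∏ j, (∏ k ∈ Finset.Ici j, t k) ^ m j := by
          exact Finset.prod_congr rfl fun j _ => Finset.prod_pow _ _ _
  exact (Function.Injective.hasSum_iff hinj hrange).mp (hcomp ▸ hgeo)

noncomputable def monicEquivLT (F : Type*) [Field F] (n : ℕ) :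
    {p : Polynomial F // p.Monic ∧ p.natDegree = n} ≃ Polynomial.degreeLT F n where
  toFun p := ⟨p.1 - Polynomial.X ^ n, by
    rw [Polynomial.mem_degreeLT]
    have h1 : (p.1 : Polynomial F).degree = (n : WithBot ℕ) := by
      have h := Polynomial.degree_eq_natDegree p.2.1.ne_zero
      rw [p.2.2] at h
      exact h
    calc (p.1 - Polynomial.X ^ n).degree < p.1.degree :=
          Polynomial.degree_sub_lt (by rw [h1, Polynomial.degree_X_pow]) p.2.1.ne_zero
            (by rw [p.2.1.leadingCoeff, (Polynomial.monic_X_pow n).leadingCoeff])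
      _ = n := h1⟩
  invFun g := ⟨Polynomial.X ^ n + g.1, by
    have hg : (g.1 : Polynomial F).degree < (Polynomial.X ^ n : Polynomial F).degree := by
      rw [Polynomial.degree_X_pow]
      exact Polynomial.mem_degreeLT.mp g.2
    refine ⟨(Polynomial.monic_X_pow n).add_of_left hg, ?_⟩
    apply Polynomial.natDegree_eq_of_degree_eq_some
    rw [Polynomial.degree_add_eq_left_of_degree_lt hg, Polynomial.degree_X_pow]⟩
  left_inv p := Subtype.ext (by ring)
  right_inv g := Subtype.ext (by ring)

noncomputable def monicEquiv (F : Type*) [Field F] (n : ℕ) :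
    {p : Polynomial F // p.Monic ∧ p.natDegree = n} ≃ (Fin n → F) :=
  (monicEquivLT F n).trans (Polynomial.degreeLTEquiv F n).toEquiv

noncomputable def monicFintype (F : Type*) [Field F] [Fintype F] (n : ℕ) :
    Fintype {p : Polynomial F // p.Monic ∧ p.natDegree = n} :=
  Fintype.ofEquiv _ (monicEquiv F n).symm

lemma card_monic (F : Type*) [Field F] [Fintype F] (n : ℕ) :
    @Fintype.card {p : Polynomial F // p.Monic ∧ p.natDegree = n} (monicFintype F n) =
      Fintype.card F ^ n := by
  letI := monicFintype F n
  rw [Fintype.card_congr (monicEquiv F n), Fintype.card_fun, Fintype.card_fin]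

def fiberEquiv (F : Type*) [Field F] {d : ℕ} (n : Fin d → ℕ) (hn : Monotone n) :
    ((fun x : {f : Fin d → Polynomial F //
        (∀ k, (f k).Monic) ∧ Monotone fun k => (f k).natDegree} =>
          (fun k => (x.1 k).natDegree)) ⁻¹' {n}) ≃
      (∀ k : Fin d, {p : Polynomial F // p.Monic ∧ p.natDegree = n k}) where
  toFun x k := ⟨x.1.1 k, x.1.2.1 k, congrFun x.2 k⟩
  invFun p := ⟨⟨fun k => (p k).1, fun k => (p k).2.1, by
      intro a b hab
      simp only
      rw [(p a).2.2, (p b).2.2]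
      exact hn hab⟩, funext fun k => (p k).2.2⟩
  left_inv x := rfl
  right_inv p := rfl

lemma fiber_isEmpty (F : Type*) [Field F] {d : ℕ} (n : Fin d → ℕ) (hn : ¬ Monotone n) :
    IsEmpty ((fun x : {f : Fin d → Polynomial F //
        (∀ k, (f k).Monic) ∧ Monotone fun k => (f k).natDegree} =>
          (fun k => (x.1 k).natDegree)) ⁻¹' {n}) := by
  refine ⟨fun x => hn ?_⟩
  have hx : (fun k => (x.1.1 k).natDegree) = n := x.2
  rw [← hx]
  exact x.1.2.2

open scoped Classical in
lemma fiber_hasSum (F : Type*) [Field F] [Fintype F] {d : ℕ} (n : Fin d → ℕ)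
    {M : Type*} [AddCommMonoid M] [TopologicalSpace M] (c : M) :
    HasSum (fun _ : ((fun x : {f : Fin d → Polynomial F //
        (∀ k, (f k).Monic) ∧ Monotone fun k => (f k).natDegree} =>
          (fun k => (x.1 k).natDegree)) ⁻¹' {n}) => c)
      ((if Monotone n then ∏ k, (Fintype.card F) ^ (n k) else 0 : ℕ) • c) := by
  by_cases hn : Monotone n
  · rw [if_pos hn]
    letI : ∀ k : Fin d, Fintype {p : Polynomial F // p.Monic ∧ p.natDegree = n k} :=
      fun k => monicFintype F (n k)
    have hfin := hasSum_fintype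
      (fun _ : (∀ k : Fin d, {p : Polynomial F // p.Monic ∧ p.natDegree = n k}) => c)
    rw [Finset.sum_const, Finset.card_univ] at hfin
    have hcard : Fintype.card (∀ k : Fin d, {p : Polynomial F // p.Monic ∧ p.natDegree = n k}) =
        ∏ k, (Fintype.card F) ^ (n k) := by
      rw [Fintype.card_pi]
      exact Finset.prod_congr rfl fun k _ => card_monic F (n k)
    rw [hcard] at hfin
    exact (Equiv.hasSum_iff (fiberEquiv F n hn).symm).mp hfin
  · rw [if_neg hn, zero_smul]
    haveI := fiber_isEmpty F n hn
    exact hasSum_empty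

end Aux

/-- On the region (R), one has
`∏_{k=1}^d (1 − q^{d−k+1−(s_k+⋯+s_d)}) · Z_d(F_q[T]; s) = 1`, equivalently
`Z_d(F_q[T]; s) = ∏_{k=1}^d (1 − q^{d−k+1−(s_k+⋯+s_d)})⁻¹`. -/
theorem multiple_zeta_FqT_eval
    (F : Type*) [Field F] [Fintype F] (d : ℕ) (hd : 1 ≤ d)
    (s : Fin d → ℂ)
    (hs : ∀ k : Fin d, (d : ℝ) - (k.val : ℝ) < (∑ j ∈ Finset.Ici k, s j).re) :
    (∏ k : Fin d,
        (1 - (Fintype.card F : ℂ) ^ ((d : ℂ) - (k.val : ℂ) - ∑ j ∈ Finset.Ici k, s j))) *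
      (∑' f : {f : Fin d → Polynomial F //
          (∀ k, (f k).Monic) ∧ Monotone fun k => (f k).natDegree},
        ∏ k : Fin d, ((Fintype.card F : ℂ) ^ (f.1 k).natDegree : ℂ) ^ (-(s k))) = 1 ∧
    HasSum (fun f : {f : Fin d → Polynomial F //
          (∀ k, (f k).Monic) ∧ Monotone fun k => (f k).natDegree} =>
        ∏ k : Fin d, ((Fintype.card F : ℂ) ^ (f.1 k).natDegree : ℂ) ^ (-(s k)))
      (∏ k : Fin d,
        (1 - (Fintype.card F : ℂ) ^ ((d : ℂ) - (k.val : ℂ) - ∑ j ∈ Finset.Ici k, s j))⁻¹) := by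
  classical
  set q : ℕ := Fintype.card F with hqdef
  have hq1 : 1 < q := Fintype.one_lt_card
  have hqC : (q : ℂ) ≠ 0 := Nat.cast_ne_zero.mpr (by omega)
  set t : Fin d → ℂ := fun k => (q : ℂ) * (q : ℂ) ^ (-(s k)) with ht
  have hprod_t : ∀ j : Fin d, (∏ k ∈ Finset.Ici j, t k) =
      (q : ℂ) ^ ((d : ℂ) - (j.val : ℂ) - ∑ k ∈ Finset.Ici j, s k) := by
    intro j
    have h1 : (∏ k ∈ Finset.Ici j, t k) =
        (∏ _k ∈ Finset.Ici j, (q : ℂ)) * ∏ k ∈ Finset.Ici j, (q : ℂ) ^ (-(s k)) := by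
      rw [← Finset.prod_mul_distrib]
    rw [h1, Finset.prod_const, ← cpow_sum' hqC, Fin.card_Ici,
      ← Complex.cpow_natCast (q : ℂ) (d - j.val), ← Complex.cpow_add _ _ hqC]
    congr 1
    rw [Nat.cast_sub j.isLt.le, Finset.sum_neg_distrib]
    ring
  have hnorm_u : ∀ j : Fin d,
      ‖(q : ℂ) ^ ((d : ℂ) - (j.val : ℂ) - ∑ k ∈ Finset.Ici j, s k)‖ < 1 := by
    intro j
    have hcast : ((q : ℕ) : ℂ) = (((q : ℕ) : ℝ) : ℂ) := by push_cast; rfl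
    rw [hcast,
      Complex.norm_cpow_eq_rpow_re_of_pos (by exact_mod_cast Nat.zero_lt_of_lt hq1)]
    apply Real.rpow_lt_one_of_one_lt_of_neg (by exact_mod_cast hq1)
    have hhs := hs j
    simp only [Complex.sub_re, Complex.natCast_re]
    linarith
  have hlt : ∀ j : Fin d, ‖∏ k ∈ Finset.Ici j, t k‖ < 1 := by
    intro j
    rw [hprod_t j]
    exact hnorm_u j
  -- the complex-valued per-degree constant identity
  have hV1 : ∀ n : Fin d → ℕ,
      ((∏ k, q ^ (n k) : ℕ) : ℂ) * ∏ k, ((q : ℂ) ^ (n k)) ^ (-(s k)) =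
        ∏ k, t k ^ (n k) := by
    intro n
    push_cast
    rw [← Finset.prod_mul_distrib]
    refine Finset.prod_congr rfl fun k _ => ?_
    rw [aux_nat_pow_cpow, ← mul_pow]
  -- fiber sums, complex version
  have hfibC : ∀ n : Fin d → ℕ,
      HasSum (fun x : ((fun x : {f : Fin d → Polynomial F //
          (∀ k, (f k).Monic) ∧ Monotone fun k => (f k).natDegree} =>
            (fun k => (x.1 k).natDegree)) ⁻¹' {n}) =>
          ∏ k, ((q : ℂ) ^ ((x.1.1 k).natDegree)) ^ (-(s k)))
        (if Monotone n then ∏ k, t k ^ n k else 0) := by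
    intro n
    have hconst : (fun x : ((fun x : {f : Fin d → Polynomial F //
          (∀ k, (f k).Monic) ∧ Monotone fun k => (f k).natDegree} =>
            (fun k => (x.1 k).natDegree)) ⁻¹' {n}) =>
          ∏ k, ((q : ℂ) ^ ((x.1.1 k).natDegree)) ^ (-(s k))) =
        fun _ => ∏ k, ((q : ℂ) ^ (n k)) ^ (-(s k)) := by
      funext x
      have hx : (fun k => (x.1.1 k).natDegree) = n := x.2
      refine Finset.prod_congr rfl fun k _ => ?_
      rw [congrFun hx k]
    rw [hconst]
    have h0 := fiber_hasSum F n (M := ℂ) (∏ k, ((q : ℂ) ^ (n k)) ^ (-(s k)))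
    convert h0 using 1
    by_cases hn : Monotone n
    · rw [if_pos hn, if_pos hn, nsmul_eq_mul]
      exact (hV1 n).symm
    · rw [if_neg hn, if_neg hn, zero_smul]
  -- fiber sums, norm version
  have hfibR : ∀ n : Fin d → ℕ,
      HasSum (fun x : ((fun x : {f : Fin d → Polynomial F //
          (∀ k, (f k).Monic) ∧ Monotone fun k => (f k).natDegree} =>
            (fun k => (x.1 k).natDegree)) ⁻¹' {n}) =>
          ‖∏ k, ((q : ℂ) ^ ((x.1.1 k).natDegree)) ^ (-(s k))‖)
        (if Monotone n then ∏ k, ‖t k‖ ^ n k else 0) := by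
    intro n
    have hconst : (fun x : ((fun x : {f : Fin d → Polynomial F //
          (∀ k, (f k).Monic) ∧ Monotone fun k => (f k).natDegree} =>
            (fun k => (x.1 k).natDegree)) ⁻¹' {n}) =>
          ‖∏ k, ((q : ℂ) ^ ((x.1.1 k).natDegree)) ^ (-(s k))‖) =
        fun _ => ‖∏ k, ((q : ℂ) ^ (n k)) ^ (-(s k))‖ := by
      funext x
      have hx : (fun k => (x.1.1 k).natDegree) = n := x.2
      congr 1
      refine Finset.prod_congr rfl fun k _ => ?_
      rw [congrFun hx k]
    rw [hconst]
    have h0 := fiber_hasSum F n (M := ℝ) ‖∏ k, ((q : ℂ) ^ (n k)) ^ (-(s k))‖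
    convert h0 using 1
    by_cases hn : Monotone n
    · rw [if_pos hn, if_pos hn, nsmul_eq_mul]
      have h2 := congrArg (fun z : ℂ => ‖z‖) (hV1 n)
      simp only [norm_mul, Complex.norm_natCast, norm_prod, norm_pow] at h2
      rw [norm_prod]
      exact h2.symm
    · rw [if_neg hn, if_neg hn, zero_smul]
  -- summability over the sigma type
  have hsummR : Summable fun x : (Σ n : Fin d → ℕ,
      ((fun x : {f : Fin d → Polynomial F //
          (∀ k, (f k).Monic) ∧ Monotone fun k => (f k).natDegree} =>
            (fun k => (x.1 k).natDegree)) ⁻¹' {n})) =>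
      ‖∏ k, ((q : ℂ) ^ ((x.2.1.1 k).natDegree)) ^ (-(s k))‖ := by
    apply (summable_sigma_of_nonneg (fun x => norm_nonneg _)).mpr
    refine ⟨fun n => (hfibR n).summable, ?_⟩
    have htsum : (fun n : Fin d → ℕ => ∑' x : ((fun x : {f : Fin d → Polynomial F //
          (∀ k, (f k).Monic) ∧ Monotone fun k => (f k).natDegree} =>
            (fun k => (x.1 k).natDegree)) ⁻¹' {n}),
          ‖∏ k, ((q : ℂ) ^ ((x.1.1 k).natDegree)) ^ (-(s k))‖) =
        fun n => if Monotone n then ∏ k, ‖t k‖ ^ n k else 0 :=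
      funext fun n => (hfibR n).tsum_eq
    rw [htsum]
    have hltR : ∀ j : Fin d, ‖∏ k ∈ Finset.Ici j, ‖t k‖‖ < 1 := by
      intro j
      rw [Real.norm_eq_abs, ← norm_prod, abs_norm]
      exact hlt j
    exact (lemmaA (fun k => ‖t k‖) hltR).summable
  -- assemble
  have HGC : HasSum (fun n : Fin d → ℕ => if Monotone n then ∏ k, t k ^ n k else 0)
      (∏ j, (1 - ∏ k ∈ Finset.Ici j, t k)⁻¹) := lemmaA t hlt
  have Hσ : HasSum (fun x : (Σ n : Fin d → ℕ,
      ((fun x : {f : Fin d → Polynomial F //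
          (∀ k, (f k).Monic) ∧ Monotone fun k => (f k).natDegree} =>
            (fun k => (x.1 k).natDegree)) ⁻¹' {n})) =>
      ∏ k, ((q : ℂ) ^ ((x.2.1.1 k).natDegree)) ^ (-(s k)))
      (∏ j, (1 - ∏ k ∈ Finset.Ici j, t k)⁻¹) :=
    HGC.sigma_of_hasSum (fun n => hfibC n) (Summable.of_norm hsummR)
  have HP : HasSum (fun f : {f : Fin d → Polynomial F //
        (∀ k, (f k).Monic) ∧ Monotone fun k => (f k).natDegree} =>
      ∏ k : Fin d, ((q : ℂ) ^ (f.1 k).natDegree : ℂ) ^ (-(s k)))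
      (∏ j, (1 - ∏ k ∈ Finset.Ici j, t k)⁻¹) :=
    (Equiv.hasSum_iff (Equiv.sigmaFiberEquiv
      (fun x : {f : Fin d → Polynomial F //
          (∀ k, (f k).Monic) ∧ Monotone fun k => (f k).natDegree} =>
        (fun k => (x.1 k).natDegree)))).mp Hσ
  have hPval : (∏ j, (1 - ∏ k ∈ Finset.Ici j, t k)⁻¹) =
      ∏ j : Fin d, (1 - (q : ℂ) ^ ((d : ℂ) - (j.val : ℂ) - ∑ k ∈ Finset.Ici j, s k))⁻¹ :=
    Finset.prod_congr rfl fun j _ => by rw [hprod_t j]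
  rw [hPval] at HP
  have hne : ∀ j : Fin d,
      (1 - (q : ℂ) ^ ((d : ℂ) - (j.val : ℂ) - ∑ k ∈ Finset.Ici j, s k)) ≠ 0 := by
    intro j h0
    have h1 := hnorm_u j
    rw [← sub_eq_zero.mp h0] at h1
    norm_num at h1
  refine ⟨?_, HP⟩
  rw [HP.tsum_eq, ← Finset.prod_mul_distrib]
  exact Finset.prod_eq_one fun j _ => mul_inv_cancel₀ (hne j)
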